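/- Let p ∈ (1, ∞). The functional E(u) = (1/p) ∬_{ℝᵈ×ℝᵈ} |u(x)-u(y)|^p / |x-y|^{d+ps} dx dy satisfies the submodularity inequality E(u ⊓ v) + E(u ⊔ v) ≤ E(u) + E(v) for all measurable u, v : ℝᵈ → ℝ, where ⊓ and ⊔ denote pointwise minimum and maximum. -/

import Mathlib

open MeasureTheory
open scoped ENNReal

/-- The fractional `p`-energy functional with parameter `s`. -/
noncomputable def fracPEnergy (d : ℕ) (s p : ℝ) (u : EuclideanSpace ℝ (Fin d) → ℝ) : ℝ≥0∞ :=
  (ENNReal.ofReal (1 / p)) *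
    ∫⁻ q : EuclideanSpace ℝ (Fin d) × EuclideanSpace ℝ (Fin d),
      ENNReal.ofReal (|u q.1 - u q.2| ^ p / dist q.1 q.2 ^ ((d : ℝ) + p * s))

private lemma abs_rpow_cvx {p : ℝ} (hp : 1 ≤ p) {a b x y : ℝ} (ha : 0 ≤ a) (hb : 0 ≤ b)
    (hab : a + b = 1) : |a * x + b * y| ^ p ≤ a * |x| ^ p + b * |y| ^ p := by
  have h1 : |a * x + b * y| ≤ a * |x| + b * |y| := by
    calc |a * x + b * y| ≤ |a * x| + |b * y| := abs_add_le _ _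
      _ = a * |x| + b * |y| := by rw [abs_mul, abs_mul, abs_of_nonneg ha, abs_of_nonneg hb]
  have h2 : |a * x + b * y| ^ p ≤ (a * |x| + b * |y|) ^ p :=
    Real.rpow_le_rpow (abs_nonneg _) h1 (by linarith)
  have h3 := (convexOn_rpow hp).2 (abs_nonneg x) (abs_nonneg y) ha hb hab
  simp only [smul_eq_mul] at h3
  exact h2.trans h3

private lemma majorize {p : ℝ} (hp : 1 ≤ p) {x1 x2 y1 y2 : ℝ} (h1 : x1 ≤ y1) (h2 : y1 ≤ x2)
    (hsum : y1 + y2 = x1 + x2) : |y1| ^ p + |y2| ^ p ≤ |x1| ^ p + |x2| ^ p := by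
  rcases eq_or_lt_of_le (h1.trans h2) with h | h
  · have hy1 : y1 = x1 := le_antisymm (h ▸ h2) h1
    have hy2 : y2 = x2 := by linarith
    rw [hy1, hy2]
  · set t : ℝ := (x2 - y1) / (x2 - x1) with ht
    have hden : 0 < x2 - x1 := by linarith
    have ht0 : 0 ≤ t := div_nonneg (by linarith) hden.le
    have ht1 : t ≤ 1 := by rw [div_le_one hden]; linarith
    have hy1 : y1 = t * x1 + (1 - t) * x2 := by
      have ht2 : t * (x2 - x1) = x2 - y1 := div_mul_cancel₀ _ hden.ne'
      linarith
    have hy2 : y2 = (1 - t) * x1 + t * x2 := by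
      have : y2 = x1 + x2 - y1 := by linarith
      rw [this, hy1]; ring
    have A := abs_rpow_cvx hp ht0 (by linarith : (0:ℝ) ≤ 1 - t) (by ring) (x := x1) (y := x2)
    have B := abs_rpow_cvx hp (by linarith : (0:ℝ) ≤ 1 - t) ht0 (by ring) (x := x1) (y := x2)
    rw [hy1, hy2]
    linarith

private lemma key_pointwise {p : ℝ} (hp : 1 ≤ p) (a b c e : ℝ) :
    |min a c - min b e| ^ p + |max a c - max b e| ^ p ≤ |a - b| ^ p + |c - e| ^ p := by
  rcases le_total a c with h1 | h1 <;> rcases le_total b e with h2 | h2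
  · rw [min_eq_left h1, min_eq_left h2, max_eq_right h1, max_eq_right h2]
  · rw [min_eq_left h1, min_eq_right h2, max_eq_right h1, max_eq_left h2]
    exact majorize hp (by linarith) (by linarith) (by ring)
  · rw [min_eq_right h1, min_eq_left h2, max_eq_left h1, max_eq_right h2]
    rw [add_comm (|a - b| ^ p)]
    exact majorize hp (by linarith) (by linarith) (by ring)
  · rw [min_eq_right h1, min_eq_right h2, max_eq_left h1, max_eq_left h2, add_comm]

theorem fracPEnergy_submodular (d : ℕ) (hd : 1 ≤ d) (s p : ℝ) (hs0 : 0 < s) (hs1 : s < 1)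
    (hp : 1 < p)
    (u v : EuclideanSpace ℝ (Fin d) → ℝ) (hu : Measurable u) (hv : Measurable v) :
    fracPEnergy d s p (fun x => min (u x) (v x)) + fracPEnergy d s p (fun x => max (u x) (v x)) ≤
      fracPEnergy d s p u + fracPEnergy d s p v := by
  have hmeas : ∀ w : EuclideanSpace ℝ (Fin d) → ℝ, Measurable w →
      Measurable (fun q : EuclideanSpace ℝ (Fin d) × EuclideanSpace ℝ (Fin d) =>
        ENNReal.ofReal (|w q.1 - w q.2| ^ p / dist q.1 q.2 ^ ((d : ℝ) + p * s))) := by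
    intro w hw
    have hr : ∀ q : ℝ, 0 ≤ q → Measurable (fun x : ℝ => x ^ q) := fun q hq =>
      (Real.continuous_rpow_const hq).measurable
    have h1 : (0:ℝ) ≤ p := by linarith
    have h2 : (0:ℝ) ≤ (d : ℝ) + p * s := by positivity
    exact ENNReal.measurable_ofReal.comp
      (((hr p h1).comp ((hw.comp measurable_fst).sub (hw.comp measurable_snd)).abs).div
        ((hr _ h2).comp measurable_dist))
  unfold fracPEnergy
  rw [← mul_add, ← mul_add]
  apply mul_le_mul_right
  rw [← lintegral_add_left (hmeas _ ((hu.min hv))), ← lintegral_add_left (hmeas _ hu)]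
  apply lintegral_mono
  intro q
  set k : ℝ := dist q.1 q.2 ^ ((d : ℝ) + p * s) with hk
  have hk0 : 0 ≤ k := Real.rpow_nonneg dist_nonneg _
  have hA : ∀ x : ℝ, (0:ℝ) ≤ |x| ^ p := fun x => Real.rpow_nonneg (abs_nonneg x) p
  simp only
  rw [← ENNReal.ofReal_add (div_nonneg (hA _) hk0) (div_nonneg (hA _) hk0),
    ← ENNReal.ofReal_add (div_nonneg (hA _) hk0) (div_nonneg (hA _) hk0),
    ← add_div, ← add_div]
  apply ENNReal.ofReal_le_ofReal
  rcases hk0.eq_or_lt with h | h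
  · simp [← h]
  · rw [div_le_div_iff_of_pos_right h]
    exact key_pointwise hp.le _ _ _ _
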